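/- Let H be a 3-uniform hypergraph on n vertices containing no trace of C_4 = K_{2,2}, and let B ⊆ E(H) be the set of edges all of whose pairs have co-degree at least 2 in H (so B has maximum co-degree at most 2). Then for any two distinct vertices x, y, the set N_1(x) ∩ N_1(y) of common neighbors has size at most 7, where N_1(v) denotes the set of vertices sharing an edge of B with v. -/

import Mathlib

open Finset

/-- The co-degree of `x` and `y` in `H`: the number of edges containing both. -/
def codeg {V : Type*} [DecidableEq V] (H : Finset (Finset V)) (x y : V) : ℕ :=
  (H.filter fun e => x ∈ e ∧ y ∈ e).card

/-- A 3-uniform hypergraph `H` contains `K_{2,t}` as a trace. -/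
def ContainsTraceK2t {V : Type*} [DecidableEq V] (H : Finset (Finset V)) (t : ℕ) : Prop :=
  ∃ (x y : V) (D : Finset V) (f g : V → Finset V), x ≠ y ∧ x ∉ D ∧ y ∉ D ∧ D.card = t ∧
    ∀ u ∈ D, f u ∈ H ∧ g u ∈ H ∧
      f u ∩ (insert x (insert y D)) = {x, u} ∧
      g u ∩ (insert x (insert y D)) = {y, u}

/-- The neighborhood `N₁(v)` of `v` in the hypergraph `B`. -/
def nbhd {V : Type*} [Fintype V] [DecidableEq V] (B : Finset (Finset V)) (v : V) : Finset V :=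
  univ.filter fun u => u ≠ v ∧ ∃ e ∈ B, v ∈ e ∧ u ∈ e

/-- Let `H` be a 3-uniform hypergraph with no `C₄ = K_{2,2}` trace and let `B`
be the set of edges all of whose pairs have co-degree at least 2 in `H`.  Then
any two distinct vertices have at most 7 common neighbors in `B`. -/
theorem stmt8 {V : Type*} [Fintype V] [DecidableEq V]
    (H : Finset (Finset V)) (h3 : ∀ e ∈ H, e.card = 3)
    (hfree : ¬ ContainsTraceK2t H 2)
    (B : Finset (Finset V))
    (hB : ∀ e, e ∈ B ↔ e ∈ H ∧ ∀ a ∈ e, ∀ b ∈ e, a ≠ b → 2 ≤ codeg H a b)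
    (x y : V) (hxy : x ≠ y) :
    (nbhd B x ∩ nbhd B y).card ≤ 7 := by
  by_contra hcard
  push_neg at hcard
  set Z := nbhd B x ∩ nbhd B y with hZdef
  have hm : 8 ≤ Z.card := hcard
  have hZx : ∀ z ∈ Z, z ≠ x := by
    intro z hz
    have h := (mem_inter.mp hz).1
    simp only [nbhd, mem_filter, mem_univ, true_and] at h
    exact h.1
  have hZy : ∀ z ∈ Z, z ≠ y := by
    intro z hz
    have h := (mem_inter.mp hz).2
    simp only [nbhd, mem_filter, mem_univ, true_and] at h
    exact h.1
  have hZxe : ∀ z ∈ Z, ∃ e ∈ B, x ∈ e ∧ z ∈ e := by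
    intro z hz
    have h := (mem_inter.mp hz).1
    simp only [nbhd, mem_filter, mem_univ, true_and] at h
    exact h.2
  have hZye : ∀ z ∈ Z, ∃ e ∈ B, y ∈ e ∧ z ∈ e := by
    intro z hz
    have h := (mem_inter.mp hz).2
    simp only [nbhd, mem_filter, mem_univ, true_and] at h
    exact h.2
  -- key: given an edge of B through p,q, there is an edge of H through p,q avoiding r
  have key : ∀ (p q r : V), p ≠ q → p ≠ r → q ≠ r →
      (∃ e ∈ B, p ∈ e ∧ q ∈ e) → ∃ a ∈ H, p ∈ a ∧ q ∈ a ∧ r ∉ a := by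
    rintro p q r hpq hpr hqr ⟨e, heB, hpe, hqe⟩
    obtain ⟨heH, hcod⟩ := (hB e).mp heB
    by_cases hre : r ∈ e
    · have h2 : 2 ≤ codeg H p q := hcod p hpe q hqe hpq
      have h1 : 1 < (H.filter fun e => p ∈ e ∧ q ∈ e).card := h2
      obtain ⟨a, haf, b, hbf, hab⟩ := Finset.one_lt_card.mp h1
      have hpqr_card : ({p, q, r} : Finset V).card = 3 := by
        rw [card_insert_of_notMem (by simp [hpq, hpr]),
          card_insert_of_notMem (by simp [hqr]), card_singleton]
      have he_eq : e = ({p, q, r} : Finset V) := by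
        refine (Finset.eq_of_subset_of_card_le ?_ ?_).symm
        · intro v hv
          simp only [mem_insert, mem_singleton] at hv
          rcases hv with rfl | rfl | rfl
          exacts [hpe, hqe, hre]
        · rw [h3 e heH, hpqr_card]
      have main : ∀ c ∈ H.filter fun e => p ∈ e ∧ q ∈ e, c ≠ e → ∃ a ∈ H, p ∈ a ∧ q ∈ a ∧ r ∉ a := by
        intro c hcf hce
        obtain ⟨hcH, hpc, hqc⟩ := mem_filter.mp hcf
        refine ⟨c, hcH, hpc, hqc, fun hrc => hce ?_⟩
        rw [he_eq]
        refine (Finset.eq_of_subset_of_card_le ?_ ?_).symm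
        · intro v hv
          simp only [mem_insert, mem_singleton] at hv
          rcases hv with rfl | rfl | rfl
          exacts [hpc, hqc, hrc]
        · rw [h3 c hcH, hpqr_card]
      by_cases hae : a = e
      · exact main b hbf (by rw [← hae]; exact hab.symm)
      · exact main a haf hae
    · exact ⟨e, heH, hpe, hqe, hre⟩
  -- choose edges a z (through x,z avoiding y) and b z (through y,z avoiding x)
  have hAex : ∀ z : V, ∃ a : Finset V, z ∈ Z → a ∈ H ∧ x ∈ a ∧ z ∈ a ∧ y ∉ a := by
    intro z
    by_cases hz : z ∈ Z
    · obtain ⟨a, haH, h1, h2, h3'⟩ :=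
        key x z y (Ne.symm (hZx z hz)) hxy (hZy z hz) (hZxe z hz)
      exact ⟨a, fun _ => ⟨haH, h1, h2, h3'⟩⟩
    · exact ⟨∅, fun h => absurd h hz⟩
  have hBex : ∀ z : V, ∃ b : Finset V, z ∈ Z → b ∈ H ∧ y ∈ b ∧ z ∈ b ∧ x ∉ b := by
    intro z
    by_cases hz : z ∈ Z
    · obtain ⟨b, hbH, h1, h2, h3'⟩ :=
        key y z x (Ne.symm (hZy z hz)) (Ne.symm hxy) (hZx z hz) (hZye z hz)
      exact ⟨b, fun _ => ⟨hbH, h1, h2, h3'⟩⟩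
    · exact ⟨∅, fun h => absurd h hz⟩
  choose a ha using hAex
  choose b hb using hBex
  -- the set of "conflict" vertices of z
  set W : V → Finset V := fun z => (a z \ {x, z}) ∪ (b z \ {y, z}) with hWdef
  have hWcard : ∀ z ∈ Z, (W z).card ≤ 2 := by
    intro z hz
    obtain ⟨haH, hxa, hza, -⟩ := ha z hz
    obtain ⟨hbH, hyb, hzb, -⟩ := hb z hz
    have h1 : (a z \ {x, z}).card ≤ 1 := by
      rw [card_sdiff_of_subset (by intro v hv; simp only [mem_insert, mem_singleton] at hv
                                   rcases hv with rfl | rfl; exacts [hxa, hza])]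
      rw [h3 _ haH, card_insert_of_notMem (by simp [Ne.symm (hZx z hz)]), card_singleton]
    have h2 : (b z \ {y, z}).card ≤ 1 := by
      rw [card_sdiff_of_subset (by intro v hv; simp only [mem_insert, mem_singleton] at hv
                                   rcases hv with rfl | rfl; exacts [hyb, hzb])]
      rw [h3 _ hbH, card_insert_of_notMem (by simp [Ne.symm (hZy z hz)]), card_singleton]
    calc (W z).card ≤ (a z \ {x, z}).card + (b z \ {y, z}).card := card_union_le _ _
      _ ≤ 2 := by omega
  set Bad : Finset (V × V) :=
    (Z.image fun z => (z, z)) ∪ Z.biUnion (fun z => {z} ×ˢ W z)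
      ∪ Z.biUnion (fun z => W z ×ˢ {z}) with hBaddef
  have hBadcard : Bad.card ≤ 5 * Z.card := by
    have c1 : (Z.image fun z => (z, z)).card ≤ Z.card := card_image_le
    have c2 : (Z.biUnion fun z => {z} ×ˢ W z).card ≤ 2 * Z.card := by
      calc (Z.biUnion fun z => {z} ×ˢ W z).card ≤ ∑ z ∈ Z, ({z} ×ˢ W z).card :=
            card_biUnion_le
        _ ≤ ∑ z ∈ Z, 2 := by
            refine sum_le_sum fun z hz => ?_
            rw [card_product, card_singleton, one_mul]
            exact hWcard z hz
        _ = 2 * Z.card := by rw [sum_const, smul_eq_mul, mul_comm]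
    have c3 : (Z.biUnion fun z => W z ×ˢ {z}).card ≤ 2 * Z.card := by
      calc (Z.biUnion fun z => W z ×ˢ {z}).card ≤ ∑ z ∈ Z, (W z ×ˢ {z}).card :=
            card_biUnion_le
        _ ≤ ∑ z ∈ Z, 2 := by
            refine sum_le_sum fun z hz => ?_
            rw [card_product, card_singleton, mul_one]
            exact hWcard z hz
        _ = 2 * Z.card := by rw [sum_const, smul_eq_mul, mul_comm]
    calc Bad.card ≤ ((Z.image fun z => (z, z)) ∪ Z.biUnion (fun z => {z} ×ˢ W z)).card
          + (Z.biUnion fun z => W z ×ˢ {z}).card := card_union_le _ _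
      _ ≤ (Z.image fun z => (z, z)).card + (Z.biUnion fun z => {z} ×ˢ W z).card
          + (Z.biUnion fun z => W z ×ˢ {z}).card := by
            have := card_union_le (Z.image fun z => (z, z)) (Z.biUnion fun z => {z} ×ˢ W z)
            omega
      _ ≤ 5 * Z.card := by omega
  -- find a good pair
  have hnotsub : ¬ (Z ×ˢ Z ⊆ Bad) := by
    intro hsub
    have h1 : (Z ×ˢ Z).card ≤ Bad.card := card_le_card hsub
    rw [card_product] at h1
    have h2 : 5 * Z.card < Z.card * Z.card := by
      calc 5 * Z.card < 8 * Z.card := by omega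
        _ ≤ Z.card * Z.card := Nat.mul_le_mul_right _ hm
    omega
  obtain ⟨p, hpP, hpBad⟩ := not_subset.mp hnotsub
  obtain ⟨z1, z2⟩ := p
  obtain ⟨hz1Z, hz2Z⟩ := mem_product.mp hpP
  have hz12 : z1 ≠ z2 := by
    intro h
    apply hpBad
    refine mem_union_left _ (mem_union_left _ (mem_image.mpr ⟨z1, hz1Z, ?_⟩))
    rw [h]
  have hnW1 : z2 ∉ W z1 := by
    intro h
    exact hpBad (mem_union_left _ (mem_union_right _ (mem_biUnion.mpr
      ⟨z1, hz1Z, mem_product.mpr ⟨mem_singleton_self _, h⟩⟩)))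
  have hnW2 : z1 ∉ W z2 := by
    intro h
    exact hpBad (mem_union_right _ (mem_biUnion.mpr
      ⟨z2, hz2Z, mem_product.mpr ⟨h, mem_singleton_self _⟩⟩))
  have hz2a : z2 ∉ a z1 := by
    intro h
    exact hnW1 (mem_union_left _ (mem_sdiff.mpr ⟨h, by
      simp only [mem_insert, mem_singleton, not_or]
      exact ⟨hZx z2 hz2Z, Ne.symm hz12⟩⟩))
  have hz2b : z2 ∉ b z1 := by
    intro h
    exact hnW1 (mem_union_right _ (mem_sdiff.mpr ⟨h, by
      simp only [mem_insert, mem_singleton, not_or]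
      exact ⟨hZy z2 hz2Z, Ne.symm hz12⟩⟩))
  have hz1a : z1 ∉ a z2 := by
    intro h
    exact hnW2 (mem_union_left _ (mem_sdiff.mpr ⟨h, by
      simp only [mem_insert, mem_singleton, not_or]
      exact ⟨hZx z1 hz1Z, hz12⟩⟩))
  have hz1b : z1 ∉ b z2 := by
    intro h
    exact hnW2 (mem_union_right _ (mem_sdiff.mpr ⟨h, by
      simp only [mem_insert, mem_singleton, not_or]
      exact ⟨hZy z1 hz1Z, hz12⟩⟩))
  obtain ⟨ha1H, hxa1, hz1a1, hya1⟩ := ha z1 hz1Z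
  obtain ⟨ha2H, hxa2, hz2a2, hya2⟩ := ha z2 hz2Z
  obtain ⟨hb1H, hyb1, hz1b1, hxb1⟩ := hb z1 hz1Z
  obtain ⟨hb2H, hyb2, hz2b2, hxb2⟩ := hb z2 hz2Z
  -- general intersection computations
  have hinterX : ∀ (s : Finset V) (u : V), u = z1 ∨ u = z2 → x ∈ s → u ∈ s → y ∉ s →
      (∀ d, d = z1 ∨ d = z2 → d ≠ u → d ∉ s) →
      s ∩ insert x (insert y {z1, z2}) = {x, u} := by
    intro s u huD h1 h2 h3' h4
    ext v
    simp only [mem_inter, mem_insert, mem_singleton]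
    constructor
    · rintro ⟨hv, rfl | rfl | h5 | h5⟩
      · exact Or.inl rfl
      · exact absurd hv h3'
      · by_cases hvu : v = u
        · exact Or.inr hvu
        · exact absurd hv (h4 v (Or.inl h5) hvu)
      · by_cases hvu : v = u
        · exact Or.inr hvu
        · exact absurd hv (h4 v (Or.inr h5) hvu)
    · rintro (rfl | rfl)
      · exact ⟨h1, Or.inl rfl⟩
      · rcases huD with rfl | rfl
        · exact ⟨h2, Or.inr (Or.inr (Or.inl rfl))⟩
        · exact ⟨h2, Or.inr (Or.inr (Or.inr rfl))⟩
  have hinterY : ∀ (s : Finset V) (u : V), u = z1 ∨ u = z2 → y ∈ s → u ∈ s → x ∉ s →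
      (∀ d, d = z1 ∨ d = z2 → d ≠ u → d ∉ s) →
      s ∩ insert x (insert y {z1, z2}) = {y, u} := by
    intro s u huD h1 h2 h3' h4
    ext v
    simp only [mem_inter, mem_insert, mem_singleton]
    constructor
    · rintro ⟨hv, rfl | rfl | h5 | h5⟩
      · exact absurd hv h3'
      · exact Or.inl rfl
      · by_cases hvu : v = u
        · exact Or.inr hvu
        · exact absurd hv (h4 v (Or.inl h5) hvu)
      · by_cases hvu : v = u
        · exact Or.inr hvu
        · exact absurd hv (h4 v (Or.inr h5) hvu)
    · rintro (rfl | rfl)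
      · exact ⟨h1, Or.inr (Or.inl rfl)⟩
      · rcases huD with rfl | rfl
        · exact ⟨h2, Or.inr (Or.inr (Or.inl rfl))⟩
        · exact ⟨h2, Or.inr (Or.inr (Or.inr rfl))⟩
  have k1 : ∀ d, d = z1 ∨ d = z2 → d ≠ z1 → d ∉ a z1 := by
    rintro d (rfl | rfl) hd
    · exact absurd rfl hd
    · exact hz2a
  have k2 : ∀ d, d = z1 ∨ d = z2 → d ≠ z1 → d ∉ b z1 := by
    rintro d (rfl | rfl) hd
    · exact absurd rfl hd
    · exact hz2b
  have k3 : ∀ d, d = z1 ∨ d = z2 → d ≠ z2 → d ∉ a z2 := by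
    rintro d (rfl | rfl) hd
    · exact hz1a
    · exact absurd rfl hd
  have k4 : ∀ d, d = z1 ∨ d = z2 → d ≠ z2 → d ∉ b z2 := by
    rintro d (rfl | rfl) hd
    · exact hz1b
    · exact absurd rfl hd
  -- build the trace of C4
  apply hfree
  refine ⟨x, y, {z1, z2}, (fun u => if u = z1 then a z1 else a z2),
    (fun u => if u = z1 then b z1 else b z2), hxy, ?_, ?_, ?_, ?_⟩
  · simp only [mem_insert, mem_singleton, not_or]
    exact ⟨Ne.symm (hZx z1 hz1Z), Ne.symm (hZx z2 hz2Z)⟩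
  · simp only [mem_insert, mem_singleton, not_or]
    exact ⟨Ne.symm (hZy z1 hz1Z), Ne.symm (hZy z2 hz2Z)⟩
  · rw [card_insert_of_notMem (by simp [hz12]), card_singleton]
  · intro u hu
    rcases mem_insert.mp hu with rfl | hu2
    · simp only [if_pos rfl]
      exact ⟨ha1H, hb1H,
        hinterX (a u) u (Or.inl rfl) hxa1 hz1a1 hya1 k1,
        hinterY (b u) u (Or.inl rfl) hyb1 hz1b1 hxb1 k2⟩
    · have huz2 : u = z2 := mem_singleton.mp hu2
      subst huz2
      simp only [if_neg (Ne.symm hz12)]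
      exact ⟨ha2H, hb2H,
        hinterX (a u) u (Or.inr rfl) hxa2 hz2a2 hya2 k3,
        hinterY (b u) u (Or.inr rfl) hyb2 hz2b2 hxb2 k4⟩
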